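/- Let {(A_i,B_i)}_{i=1}^m be a collection of pairs of finite sets with |A_i| = a and |B_i| = b for every 1 ≤ i ≤ m, where a ≤ b. Suppose that A_i ∩ A_j ≠ ∅ for all 1 ≤ i, j ≤ m; A_i ∩ B_i = ∅ for all 1 ≤ i ≤ m; and A_i ∩ B_j ≠ ∅ for all 1 ≤ i < j ≤ m. Then m ≤ C(a+b-1, a-1). -/

import Mathlib

set_option maxHeartbeats 1000000

open ExteriorAlgebra Finset

namespace GKc

variable {n : ℕ}

abbrev Vn (n : ℕ) := Fin n → ℚ
abbrev En (n : ℕ) := ExteriorAlgebra ℚ (Vn n)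

/-- product of a list of vectors in the exterior algebra -/
noncomputable def pl (l : List (Vn n)) : En n := (l.map (ι ℚ)).prod

lemma pl_nil : pl ([] : List (Vn n)) = 1 := rfl

lemma pl_cons (x : Vn n) (l : List (Vn n)) : pl (x :: l) = ι ℚ x * pl l := by
  simp [pl]

lemma pl_append (l₁ l₂ : List (Vn n)) : pl (l₁ ++ l₂) = pl l₁ * pl l₂ := by
  simp [pl]

lemma anticomm (x y : Vn n) : ι ℚ x * ι ℚ y = -(ι ℚ y * ι ℚ x) := by
  exact eq_neg_of_add_eq_zero_left (ExteriorAlgebra.ι_add_mul_swap (R := ℚ) x y)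

lemma ι_mul_pl_eq_zero {x : Vn n} {l : List (Vn n)} (h : x ∈ l) :
    ι ℚ x * pl l = 0 := by
  induction l with
  | nil => simp at h
  | cons y t ih =>
    rw [pl_cons, ← mul_assoc]
    rcases List.mem_cons.1 h with rfl | ht
    · rw [ι_sq_zero, zero_mul]
    · rw [anticomm, neg_mul, mul_assoc, ih ht, mul_zero, neg_zero]

lemma pl_mul_pl_eq_zero {x : Vn n} {l₁ l₂ : List (Vn n)} (h₁ : x ∈ l₁) (h₂ : x ∈ l₂) :
    pl l₁ * pl l₂ = 0 := by
  induction l₁ with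
  | nil => simp at h₁
  | cons y t ih =>
    rw [pl_cons, mul_assoc]
    rcases List.mem_cons.1 h₁ with rfl | ht
    · rw [← pl_append]
      exact ι_mul_pl_eq_zero (by simp [h₂])
    · rw [ih ht, mul_zero]

lemma pl_eq_zero_of_not_nodup {l : List (Vn n)} (h : ¬ l.Nodup) : pl l = 0 := by
  induction l with
  | nil => simp at h
  | cons y t ih =>
    rw [List.nodup_cons] at h
    push_neg at h
    by_cases hy : y ∈ t
    · rw [pl_cons]; exact ι_mul_pl_eq_zero hy
    · rw [pl_cons, ih (h hy), mul_zero]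

/-- the determinant alternating form in degree n -/
noncomputable def detA (n : ℕ) : (Vn n) [⋀^Fin n]→ₗ[ℚ] ℚ := (Pi.basisFun ℚ (Fin n)).det

/-- the top-degree determinant functional on the exterior algebra -/
noncomputable def Df (n : ℕ) : En n →ₗ[ℚ] ℚ :=
  ExteriorAlgebra.liftAlternating
    (fun i => if h : i = n then (detA n).domDomCongr (finCongr h.symm) else 0)

lemma pl_eq_ιMulti (l : List (Vn n)) : pl l = ιMulti ℚ l.length l.get := by
  rw [ExteriorAlgebra.ιMulti_apply, pl]
  congr 1
  conv_lhs => rw [← List.ofFn_get l]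
  rw [List.map_ofFn]
  rfl

lemma Df_pl_of_length_ne {l : List (Vn n)} (h : l.length ≠ n) : Df n (pl l) = 0 := by
  rw [pl_eq_ιMulti, Df, ExteriorAlgebra.liftAlternating_apply_ιMulti, dif_neg h]
  rfl

lemma Df_pl {l : List (Vn n)} (h : l.length = n) :
    Df n (pl l) = detA n (fun k => l.get (Fin.cast h.symm k)) := by
  rw [pl_eq_ιMulti, Df, ExteriorAlgebra.liftAlternating_apply_ιMulti, dif_pos h,
    AlternatingMap.domDomCongr_apply]
  rfl


/-- standard basis vector -/
noncomputable def bv (t : Fin n) : Vn n := Pi.basisFun ℚ (Fin n) t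

/-- monomial: sorted product of standard basis vectors over a finset -/
noncomputable def eM (S : Finset (Fin n)) : En n := pl ((S.sort (·≤·)).map bv)

lemma eM_empty : eM (∅ : Finset (Fin n)) = 1 := by simp [eM, pl]

lemma eM_mul_eM_of_mem {S T : Finset (Fin n)} {x : Fin n} (hS : x ∈ S) (hT : x ∈ T) :
    eM S * eM T = 0 :=
  pl_mul_pl_eq_zero (List.mem_map_of_mem (f := bv) ((Finset.mem_sort _).2 hS))
    (List.mem_map_of_mem (f := bv) ((Finset.mem_sort _).2 hT))

lemma ι_bv_mul_sorted {j : Fin n} {s : List (Fin n)} (hs : s.Pairwise (·≤·)) :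
    ∃ ε : ℚ, ε ≠ 0 ∧ ι ℚ (bv j) * pl (s.map bv) = ε • pl ((s.orderedInsert (·≤·) j).map bv) := by
  induction s with
  | nil => exact ⟨1, one_ne_zero, by simp [pl_cons]⟩
  | cons h t ih =>
    by_cases hjh : j ≤ h
    · exact ⟨1, one_ne_zero, by simp [List.orderedInsert, hjh, pl_cons]⟩
    · obtain ⟨ε, hε, hrec⟩ := ih (List.pairwise_cons.1 hs).2
      refine ⟨-ε, neg_ne_zero.2 hε, ?_⟩
      rw [List.orderedInsert, if_neg hjh]
      simp only [List.map_cons, pl_cons] at *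
      rw [← mul_assoc, anticomm, neg_mul, mul_assoc, hrec, mul_smul_comm, neg_smul]

lemma sort_insert_eq {j : Fin n} {S : Finset (Fin n)} (hj : j ∉ S) :
    (insert j S).sort (·≤·) = (S.sort (·≤·)).orderedInsert (·≤·) j := by
  have p1 : ((insert j S).sort (·≤·)).Perm (insert j S).toList := Finset.sort_perm_toList _ _
  have p2 : ((insert j S).toList).Perm (j :: S.toList) := Finset.toList_insert hj
  have p3 : (j :: S.toList).Perm (j :: S.sort (·≤·)) :=
    List.Perm.cons _ (Finset.sort_perm_toList _ _).symm
  have p4 : ((S.sort (·≤·)).orderedInsert (·≤·) j).Perm (j :: S.sort (·≤·)) :=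
    List.perm_orderedInsert _ _ _
  exact List.Perm.eq_of_pairwise' (Finset.pairwise_sort _ _)
    ((Finset.pairwise_sort S _).orderedInsert j _) (p1.trans ((p2.trans p3).trans p4.symm))

lemma ι_bv_mul_eM {j : Fin n} {S : Finset (Fin n)} (hj : j ∉ S) :
    ∃ ε : ℚ, ε ≠ 0 ∧ ι ℚ (bv j) * eM S = ε • eM (insert j S) := by
  obtain ⟨ε, hε, h⟩ := ι_bv_mul_sorted (j := j) (Finset.pairwise_sort S (·≤·))
  exact ⟨ε, hε, by rw [eM, h, eM, sort_insert_eq hj]⟩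

lemma mem_foldr_insert {l : List (Fin n)} {T : Finset (Fin n)} {x : Fin n} :
    x ∈ l.foldr insert T ↔ x ∈ l ∨ x ∈ T := by
  induction l with
  | nil => simp
  | cons h t ih => simp [List.foldr_cons, Finset.mem_insert, ih, or_assoc]

lemma pl_list_mul_eM {l : List (Fin n)} {T : Finset (Fin n)} (hnd : l.Nodup)
    (hdisj : ∀ x ∈ l, x ∉ T) :
    ∃ ε : ℚ, ε ≠ 0 ∧ pl (l.map bv) * eM T = ε • eM (l.foldr insert T) := by
  induction l with
  | nil => exact ⟨1, one_ne_zero, by simp [pl]⟩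
  | cons h t ih =>
    obtain ⟨ε, hε, hrec⟩ := ih (List.nodup_cons.1 hnd).2 (fun x hx => hdisj x (List.mem_cons_of_mem _ hx))
    have hh : h ∉ t.foldr insert T := by
      rw [mem_foldr_insert]
      push_neg
      exact ⟨(List.nodup_cons.1 hnd).1, hdisj h List.mem_cons_self⟩
    obtain ⟨ε₂, hε₂, hins⟩ := ι_bv_mul_eM hh
    refine ⟨ε * ε₂, mul_ne_zero hε hε₂, ?_⟩
    rw [List.map_cons, pl_cons, mul_assoc, hrec, mul_smul_comm, hins, List.foldr_cons, smul_smul]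

lemma foldr_insert_eq_union {l : List (Fin n)} {T : Finset (Fin n)} :
    l.foldr insert T = l.toFinset ∪ T := by
  induction l with
  | nil => simp
  | cons h t ih => simp [List.foldr_cons, ih, Finset.insert_union]

lemma eM_mul_eM {K T : Finset (Fin n)} (hd : Disjoint K T) :
    ∃ ε : ℚ, ε ≠ 0 ∧ eM K * eM T = ε • eM (K ∪ T) := by
  obtain ⟨ε, hε, h⟩ := pl_list_mul_eM (l := K.sort (·≤·)) (T := T) (Finset.sort_nodup _ _)
    (fun x hx => Finset.disjoint_left.1 hd ((Finset.mem_sort _).1 hx))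
  refine ⟨ε, hε, ?_⟩
  rw [eM, h, foldr_insert_eq_union, Finset.sort_toFinset]

lemma sort_univ_eq : ((univ : Finset (Fin n)).sort (·≤·)) = List.finRange n := by
  refine List.Perm.eq_of_pairwise' (r := (·≤·)) (Finset.pairwise_sort _ _) ?_
    (List.perm_of_nodup_nodup_toFinset_eq (Finset.sort_nodup _ _) (List.nodup_finRange n)
      (by rw [Finset.sort_toFinset, List.toFinset_finRange]))
  exact List.pairwise_iff_get.2 (fun i j hij => by
    rw [List.get_finRange, List.get_finRange]
    exact le_of_lt (by simpa using hij))

lemma Df_eM_univ : Df n (eM (univ : Finset (Fin n))) = 1 := by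
  have hlen : (((univ : Finset (Fin n)).sort (·≤·)).map bv).length = n := by
    rw [List.length_map, Finset.length_sort, Finset.card_univ, Fintype.card_fin]
  rw [eM, Df_pl hlen]
  have : (fun k => (((univ : Finset (Fin n)).sort (·≤·)).map bv).get (Fin.cast hlen.symm k))
      = fun k => bv k := by
    funext k
    simp only [List.get_eq_getElem, List.getElem_map]
    simp only [sort_univ_eq, List.getElem_finRange]
    rfl
  rw [this]
  exact Module.Basis.det_self _

/-- coordinate functional in "degree #S" given by multiplying with the complementary monomial -/
noncomputable def coord (S : Finset (Fin n)) : En n →ₗ[ℚ] ℚ :=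
  (Df n).comp (LinearMap.mulRight ℚ (eM Sᶜ))

lemma coord_apply (S : Finset (Fin n)) (u : En n) : coord S u = Df n (u * eM Sᶜ) := rfl

lemma coord_eM_self_ne_zero (S : Finset (Fin n)) : coord S (eM S) ≠ 0 := by
  obtain ⟨ε, hε, h⟩ := eM_mul_eM (disjoint_compl_right (a := S))
  rw [coord_apply, h, Finset.union_compl, map_smul, Df_eM_univ]
  simpa using hε

lemma coord_eM_ne {S S' : Finset (Fin n)} (hcard : #S' = #S) (hne : S' ≠ S) :
    coord S (eM S') = 0 := by
  have : ∃ x ∈ S', x ∉ S := by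
    by_contra hc
    push_neg at hc
    exact hne (Finset.eq_of_subset_of_card_le hc (le_of_eq hcard.symm))
  obtain ⟨x, hx, hxn⟩ := this
  rw [coord_apply, eM_mul_eM_of_mem hx (Finset.mem_compl.2 hxn), map_zero]

/-- span of degree-k monomials -/
noncomputable def spanDeg (n k : ℕ) : Submodule ℚ (En n) :=
  Submodule.span ℚ (Set.range (fun K : {K : Finset (Fin n) // #K = k} => eM K.1))

lemma eM_mem_spanDeg {K : Finset (Fin n)} {k : ℕ} (h : #K = k) : eM K ∈ spanDeg n k :=
  Submodule.subset_span ⟨⟨K, h⟩, rfl⟩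

lemma ι_mul_mem_spanDeg {k : ℕ} {u : En n} (hu : u ∈ spanDeg n k) (x : Vn n) :
    ι ℚ x * u ∈ spanDeg n (k + 1) := by
  induction hu using Submodule.span_induction with
  | mem w hw =>
    obtain ⟨⟨K, hK⟩, rfl⟩ := hw
    have hx : x = ∑ t : Fin n, x t • bv t := by
      conv_lhs => rw [pi_eq_sum_univ x]
      refine Finset.sum_congr rfl (fun t _ => ?_)
      congr 1
      funext j
      simp [bv, Pi.basisFun_apply, Pi.single_apply, eq_comm]
    rw [hx, map_sum, Finset.sum_mul]
    refine Submodule.sum_mem _ (fun t _ => ?_)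
    rw [map_smul, smul_mul_assoc]
    refine Submodule.smul_mem _ _ ?_
    by_cases ht : t ∈ K
    · have : ι ℚ (bv t) * eM K = 0 :=
        ι_mul_pl_eq_zero (List.mem_map_of_mem (f := bv) ((Finset.mem_sort _).2 ht))
      rw [this]; exact Submodule.zero_mem _
    · obtain ⟨ε, hε, h⟩ := ι_bv_mul_eM ht
      rw [h]
      exact Submodule.smul_mem _ _ (eM_mem_spanDeg (by rw [Finset.card_insert_of_notMem ht, hK]))
  | zero => rw [mul_zero]; exact Submodule.zero_mem _
  | add y z _ _ hy hz => rw [mul_add]; exact Submodule.add_mem _ hy hz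
  | smul c y _ hy => rw [mul_smul_comm]; exact Submodule.smul_mem _ _ hy

lemma pl_mem_spanDeg (l : List (Vn n)) : pl l ∈ spanDeg n l.length := by
  induction l with
  | nil =>
    rw [pl_nil, ← eM_empty]
    exact eM_mem_spanDeg (by simp)
  | cons x t ih =>
    rw [pl_cons]
    exact ι_mul_mem_spanDeg ih x

lemma mul_eM_mem_spanDeg {k : ℕ} {u : En n} (hu : u ∈ spanDeg n k) (T : Finset (Fin n)) :
    u * eM T ∈ spanDeg n (k + #T) := by
  induction hu using Submodule.span_induction with
  | mem w hw =>
    obtain ⟨⟨K, hK⟩, rfl⟩ := hw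
    by_cases hd : Disjoint K T
    · obtain ⟨ε, hε, h⟩ := eM_mul_eM hd
      rw [h]
      exact Submodule.smul_mem _ _ (eM_mem_spanDeg (by rw [Finset.card_union_of_disjoint hd, hK]))
    · rw [Finset.not_disjoint_iff] at hd
      obtain ⟨x, hx1, hx2⟩ := hd
      rw [eM_mul_eM_of_mem hx1 hx2]
      exact Submodule.zero_mem _
  | zero => rw [zero_mul]; exact Submodule.zero_mem _
  | add y z _ _ hy hz => rw [add_mul]; exact Submodule.add_mem _ hy hz
  | smul c y _ hy => rw [smul_mul_assoc]; exact Submodule.smul_mem _ _ hy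

lemma coord_zero_of_all {k : ℕ} {u : En n} (hu : u ∈ spanDeg n k)
    (hall : ∀ K : Finset (Fin n), #K = k → coord K u = 0) : u = 0 := by
  rw [spanDeg, Submodule.mem_span_range_iff_exists_fun] at hu
  obtain ⟨c, rfl⟩ := hu
  have hc : ∀ K : {K : Finset (Fin n) // #K = k}, c K = 0 := by
    intro K
    have h0 := hall K.1 K.2
    rw [map_sum, Finset.sum_eq_single K
        (fun K' _ hne => by
          rw [map_smul, coord_eM_ne (by rw [K'.2, K.2]) (fun h => hne (Subtype.ext h)), smul_zero])
        (fun h => absurd (Finset.mem_univ K) h),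
      map_smul, smul_eq_mul] at h0
    exact (mul_eq_zero.1 h0).resolve_right (coord_eM_self_ne_zero K.1)
  simp only [hc, zero_smul, Finset.sum_const_zero]

lemma coord_eM_mul_eM {K T S : Finset (Fin n)} (hcard : #K + #T = #S)
    (hKS : ¬ (Disjoint K T ∧ K ∪ T = S)) : coord S (eM K * eM T) = 0 := by
  by_cases hd : Disjoint K T
  · obtain ⟨ε, hε, h⟩ := eM_mul_eM hd
    rw [h, map_smul, coord_eM_ne (by rw [Finset.card_union_of_disjoint hd, hcard])
      (fun h' => hKS ⟨hd, h'⟩), smul_zero]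
  · rw [Finset.not_disjoint_iff] at hd
    obtain ⟨x, hx1, hx2⟩ := hd
    rw [eM_mul_eM_of_mem hx1 hx2, map_zero]

lemma coord_mul_eM_expand {k : ℕ} (c : {K : Finset (Fin n) // #K = k} → ℚ)
    (T S : Finset (Fin n)) (hS : k + #T = #S) (hTS : T ⊆ S) (hSa : #(S \ T) = k) :
    coord S ((∑ K : {K : Finset (Fin n) // #K = k}, c K • eM K.1) * eM T)
      = c ⟨S \ T, hSa⟩ * coord S (eM (S \ T) * eM T) := by
  rw [Finset.sum_mul]
  simp_rw [smul_mul_assoc]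
  rw [map_sum]
  rw [Finset.sum_eq_single (⟨S \ T, hSa⟩ : {K : Finset (Fin n) // #K = k})]
  · rw [map_smul, smul_eq_mul]
  · intro K _ hne
    rw [map_smul, coord_eM_mul_eM (by rw [K.2, hS]) ?_, smul_zero]
    rintro ⟨hd, rfl⟩
    exact hne (Subtype.ext (Finset.union_sdiff_cancel_right hd).symm)
  · intro h
    exact absurd (Finset.mem_univ _) h

lemma coord_mul_eM_of_not_subset {k : ℕ} {u : En n} (hu : u ∈ spanDeg n k)
    {T S : Finset (Fin n)} (hS : k + #T = #S) (h : ¬ T ⊆ S) :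
    coord S (u * eM T) = 0 := by
  rw [spanDeg, Submodule.mem_span_range_iff_exists_fun] at hu
  obtain ⟨c, rfl⟩ := hu
  rw [Finset.sum_mul]
  simp_rw [smul_mul_assoc]
  rw [map_sum]
  refine Finset.sum_eq_zero (fun K _ => ?_)
  rw [map_smul, coord_eM_mul_eM (by rw [K.2, hS]) ?_, smul_zero]
  rintro ⟨-, rfl⟩
  exact h Finset.subset_union_right

/-- key fact : the S-coordinate of `u * eM T` is a nonzero multiple of the
`S \ T`-coordinate of `u`. -/
lemma coord_mul_eM_of_subset {k : ℕ} {u : En n} (hu : u ∈ spanDeg n k)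
    {T S : Finset (Fin n)} (hS : k + #T = #S) (hTS : T ⊆ S) :
    ∃ ε : ℚ, ε ≠ 0 ∧ coord S (u * eM T) = ε * coord (S \ T) u := by
  have hSa : #(S \ T) = k := by
    rw [Finset.card_sdiff_of_subset hTS]
    omega
  rw [spanDeg, Submodule.mem_span_range_iff_exists_fun] at hu
  obtain ⟨c, rfl⟩ := hu
  rw [coord_mul_eM_expand c T S hS hTS hSa]
  have hrep : coord (S \ T) (∑ K : {K : Finset (Fin n) // #K = k}, c K • eM K.1)
      = c ⟨S \ T, hSa⟩ * coord (S \ T) (eM (S \ T)) := by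
    rw [map_sum, Finset.sum_eq_single (⟨S \ T, hSa⟩ : {K : Finset (Fin n) // #K = k})]
    · rw [map_smul, smul_eq_mul]
    · intro K _ hne
      rw [map_smul, coord_eM_ne (by rw [K.2, hSa]) (fun h => hne (Subtype.ext h)), smul_zero]
    · intro h
      exact absurd (Finset.mem_univ _) h
  have hunion : S \ T ∪ T = S := by
    rw [Finset.sdiff_union_self_eq_union, Finset.union_eq_left.2 hTS]
  obtain ⟨ε₀, hε₀, hprod⟩ := eM_mul_eM (show Disjoint (S \ T) T from Finset.sdiff_disjoint)
  rw [hunion] at hprod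
  refine ⟨ε₀ * coord S (eM S) / coord (S \ T) (eM (S \ T)),
    div_ne_zero (mul_ne_zero hε₀ (coord_eM_self_ne_zero S)) (coord_eM_self_ne_zero _), ?_⟩
  rw [hrep, hprod, map_smul, smul_eq_mul]
  have h1 := coord_eM_self_ne_zero (S \ T) (n := n)
  field_simp

lemma tri_min {m : ℕ} (M : Fin m → Fin m → ℚ) (c : Fin m → ℚ)
    (hvan : ∀ i j, i < j → M i j = 0) (hdiag : ∀ i, M i i ≠ 0)
    (hrel : ∀ i, ∑ j, c j * M i j = 0) : ∀ j, c j = 0 := by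
  by_contra hc
  push_neg at hc
  obtain ⟨j₀, hj₀⟩ := hc
  obtain ⟨i₀, hi₀mem, hi₀min⟩ := Finset.exists_min_image (univ.filter (fun j => c j ≠ 0)) id
    ⟨j₀, Finset.mem_filter.2 ⟨Finset.mem_univ _, hj₀⟩⟩
  have hci₀ : c i₀ ≠ 0 := (Finset.mem_filter.1 hi₀mem).2
  have := hrel i₀
  rw [Finset.sum_eq_single i₀] at this
  · exact hci₀ (by
      have := mul_eq_zero.1 this
      tauto)
  · intro j _ hne
    by_cases hcj : c j = 0
    · rw [hcj, zero_mul]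
    · have hij : i₀ < j := lt_of_le_of_ne
        (hi₀min j (Finset.mem_filter.2 ⟨Finset.mem_univ _, hcj⟩)) (Ne.symm hne)
      rw [hvan _ _ hij, mul_zero]
  · intro h
    exact absurd (Finset.mem_univ _) h

lemma tri_max {m : ℕ} (M : Fin m → Fin m → ℚ) (c : Fin m → ℚ)
    (hvan : ∀ i j, i < j → M i j = 0) (hdiag : ∀ i, M i i ≠ 0)
    (hrel : ∀ j, ∑ i, c i * M i j = 0) : ∀ i, c i = 0 := by
  by_contra hc
  push_neg at hc
  obtain ⟨i₀, hi₀⟩ := hc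
  obtain ⟨j₀, hj₀mem, hj₀max⟩ := Finset.exists_max_image (univ.filter (fun i => c i ≠ 0)) id
    ⟨i₀, Finset.mem_filter.2 ⟨Finset.mem_univ _, hi₀⟩⟩
  have hcj₀ : c j₀ ≠ 0 := (Finset.mem_filter.1 hj₀mem).2
  have := hrel j₀
  rw [Finset.sum_eq_single j₀] at this
  · exact hcj₀ (by
      have := mul_eq_zero.1 this
      tauto)
  · intro i _ hne
    by_cases hci : c i = 0
    · rw [hci, zero_mul]
    · have hij : i < j₀ := lt_of_le_of_ne
        (hj₀max i (Finset.mem_filter.2 ⟨Finset.mem_univ _, hci⟩)) hne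
      rw [hvan _ _ hij, mul_zero]
  · intro h
    exact absurd (Finset.mem_univ _) h

/-- moment curve vector -/
noncomputable def mom (n : ℕ) (q : ℚ) : Vn n := fun k => q ^ (k : ℕ)

lemma Df_pl_moment {l : List ℚ} (hlen : l.length = n) (hnd : l.Nodup) :
    Df n (pl (l.map (mom n))) ≠ 0 := by
  have hlen' : (l.map (mom n)).length = n := by rw [List.length_map, hlen]
  rw [Df_pl hlen']
  have hfam : (fun k => (l.map (mom n)).get (Fin.cast hlen'.symm k))
      = fun k => mom n (l.get (Fin.cast hlen.symm k)) := by
    funext k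
    simp [List.get_eq_getElem, List.getElem_map]
  rw [hfam, detA, Module.Basis.det_apply]
  have hM : (Pi.basisFun ℚ (Fin n)).toMatrix (fun k => mom n (l.get (Fin.cast hlen.symm k)))
      = (Matrix.vandermonde (fun j => l.get (Fin.cast hlen.symm j))).transpose := by
    ext i j
    simp [Module.Basis.toMatrix_apply, Pi.basisFun_repr, Matrix.transpose_apply,
      Matrix.vandermonde_apply, mom]
  rw [hM, Matrix.det_transpose]
  refine Matrix.det_vandermonde_ne_zero_iff.2 (fun j₁ j₂ h => ?_)
  have := (List.Nodup.get_inj_iff hnd).1 h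
  exact Fin.ext (by simpa using congrArg Fin.val this)

end GKc

open GKc ExteriorAlgebra Finset Finset.Colex
open scoped FinsetFamily

/-- The conjecture of Gerbner et al.: the `t = 0` uniform case of the
hemi-bundled Bollobás theorem for sets. -/
theorem gerbner_conjecture {α : Type*} [DecidableEq α] (m a b : ℕ) (hab : a ≤ b)
    (A B : Fin m → Finset α)
    (hA : ∀ i, (A i).card = a) (hB : ∀ i, (B i).card = b)
    (hAA : ∀ i j, (A i ∩ A j).Nonempty)
    (hABi : ∀ i, A i ∩ B i = ∅)
    (hABj : ∀ i j, i < j → (A i ∩ B j).Nonempty) :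
    m ≤ (a + b - 1).choose (a - 1) := by
  classical
  rcases Nat.eq_zero_or_pos m with hm0 | hmpos
  · omega
  have ha : 1 ≤ a := by
    have h0 := hAA ⟨0, hmpos⟩ ⟨0, hmpos⟩
    rw [Finset.inter_self] at h0
    have := Finset.card_pos.2 h0
    rw [hA] at this
    omega
  set n := a + b with hn
  -- ## The ground data
  set X : Finset α := Finset.univ.biUnion (fun i : Fin m => A i ∪ B i) with hX
  set t : α → ℚ := fun x => if hx : x ∈ X then ((X.equivFin ⟨x, hx⟩ : ℕ) : ℚ) else 0 with ht
  have htinj : ∀ x ∈ X, ∀ y ∈ X, t x = t y → x = y := by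
    intro x hx y hy hxy
    rw [ht] at hxy
    simp only [dif_pos hx, dif_pos hy, Nat.cast_inj] at hxy
    have := X.equivFin.injective (Fin.ext hxy)
    exact congrArg Subtype.val this
  set vv : α → Vn n := fun x => mom n (t x) with hvv
  set wA : Fin m → En n := fun i => pl (((A i).toList).map vv) with hwA
  set wB : Fin m → En n := fun j => pl (((B j).toList).map vv) with hwB
  have hwAmem : ∀ i, wA i ∈ spanDeg n a := by
    intro i
    have h := pl_mem_spanDeg (((A i).toList).map vv)
    rwa [List.length_map, Finset.length_toList, hA] at h
  have hwBmem : ∀ j, wB j ∈ spanDeg n b := by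
    intro j
    have h := pl_mem_spanDeg (((B j).toList).map vv)
    rwa [List.length_map, Finset.length_toList, hB] at h
  -- ## Vanishing products
  have hprode : ∀ (S T : Finset α), (S ∩ T).Nonempty →
      pl (S.toList.map vv) * pl (T.toList.map vv) = 0 := by
    rintro S T ⟨x, hx⟩
    rw [Finset.mem_inter] at hx
    exact pl_mul_pl_eq_zero
      (List.mem_map_of_mem (f := vv) ((Finset.mem_toList).2 hx.1))
      (List.mem_map_of_mem (f := vv) ((Finset.mem_toList).2 hx.2))
  have hAA0 : ∀ i j, wA i * wA j = 0 := fun i j => hprode _ _ (hAA i j)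
  have hAB0 : ∀ i j, i < j → wA i * wB j = 0 := fun i j hij => hprode _ _ (hABj i j hij)
  -- ## Nonvanishing diagonal
  have hdiag : ∀ i, Df n (wA i * wB i) ≠ 0 := by
    intro i
    have hdisj : Disjoint (A i) (B i) := Finset.disjoint_iff_inter_eq_empty.2 (hABi i)
    set l : List α := (A i).toList ++ (B i).toList with hl
    have hlnd : l.Nodup := List.Nodup.append (Finset.nodup_toList _) (Finset.nodup_toList _)
      (fun x hx1 hx2 => (Finset.disjoint_left.1 hdisj
        ((Finset.mem_toList).1 hx1)) ((Finset.mem_toList).1 hx2))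
    have hllen : l.length = n := by
      rw [hl, List.length_append, Finset.length_toList, Finset.length_toList, hA, hB]
    have heq : wA i * wB i = pl ((l.map t).map (mom n)) := by
      rw [hwA, hwB, ← pl_append, ← List.map_append, hl, List.map_map]
      rfl
    rw [heq]
    refine Df_pl_moment (by rw [List.length_map, hllen]) ?_
    refine List.Nodup.map_on ?_ hlnd
    intro x hx y hy hxy
    have hmem : ∀ z ∈ l, z ∈ X := by
      intro z hz
      rw [hX]
      refine Finset.mem_biUnion.2 ⟨i, Finset.mem_univ _, ?_⟩
      rcases List.mem_append.1 hz with h | h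
      · exact Finset.mem_union_left _ ((Finset.mem_toList).1 h)
      · exact Finset.mem_union_right _ ((Finset.mem_toList).1 h)
    exact htinj x (hmem x hx) y (hmem y hy) hxy
  -- ## linear independence of the wA
  have hindA : LinearIndependent ℚ wA := by
    rw [Fintype.linearIndependent_iff]
    intro c hc
    refine tri_max (fun i j => Df n (wA i * wB j)) c
      (fun i j hij => by show Df n (wA i * wB j) = 0; rw [hAB0 i j hij, map_zero])
      hdiag (fun j => ?_)
    have h0 : Df n ((∑ i, c i • wA i) * wB j) = 0 := by rw [hc, zero_mul, map_zero]
    rw [Finset.sum_mul] at h0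
    simp_rw [smul_mul_assoc] at h0
    rw [map_sum] at h0
    simpa [smul_eq_mul] using h0
  set 𝕎 : Submodule ℚ (En n) := Submodule.span ℚ (Set.range wA) with h𝕎
  have h𝕎deg : 𝕎 ≤ spanDeg n a := Submodule.span_le.2 (by rintro - ⟨i, rfl⟩; exact hwAmem i)
  have hwAu0 : ∀ i, ∀ u ∈ 𝕎, wA i * u = 0 := by
    intro i u hu
    induction hu using Submodule.span_induction with
    | mem y hy => obtain ⟨j, rfl⟩ := hy; exact hAA0 i j
    | zero => rw [mul_zero]
    | add y z _ _ hy hz => rw [mul_add, hy, hz, add_zero]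
    | smul c y _ hy => rw [mul_smul_comm, hy, smul_zero]
  -- ## leading sets
  have hmax : ∀ u ∈ 𝕎, u ≠ 0 → ∃ Ks : Finset (Fin n), #Ks = a ∧ coord Ks u ≠ 0 ∧
      ∀ K', #K' = a → coord K' u ≠ 0 → toColex K' ≤ toColex Ks := by
    intro u hu hune
    set F : Finset (Finset (Fin n)) := (univ.powersetCard a).filter (fun K => coord K u ≠ 0)
      with hF
    have hFne : F.Nonempty := by
      rw [Finset.nonempty_iff_ne_empty]
      intro hemp
      refine hune (coord_zero_of_all (h𝕎deg hu) (fun K hK => ?_))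
      by_contra hne
      have : K ∈ F := Finset.mem_filter.2
        ⟨Finset.mem_powersetCard.2 ⟨Finset.subset_univ _, hK⟩, hne⟩
      rw [hemp] at this
      exact absurd this (Finset.notMem_empty _)
    obtain ⟨Ks, hKsF, hKseq⟩ := Finset.mem_image.1 ((F.image toColex).max'_mem (hFne.image _))
    refine ⟨Ks, (Finset.mem_powersetCard.1 (Finset.mem_filter.1 hKsF).1).2,
      (Finset.mem_filter.1 hKsF).2, fun K' hK' hKne => ?_⟩
    rw [hKseq]
    exact Finset.le_max' _ _ (Finset.mem_image_of_mem _
      (Finset.mem_filter.2 ⟨Finset.mem_powersetCard.2 ⟨Finset.subset_univ _, hK'⟩, hKne⟩))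
  set FF : Finset (Finset (Fin n)) := (univ.powersetCard a).filter
    (fun K => ∃ u, u ∈ 𝕎 ∧ coord K u ≠ 0 ∧
      ∀ K', #K' = a → coord K' u ≠ 0 → toColex K' ≤ toColex K) with hFF
  have getW : ∀ K, K ∈ FF → ∃ u, u ∈ 𝕎 ∧ coord K u ≠ 0 ∧
      ∀ K', #K' = a → coord K' u ≠ 0 → toColex K' ≤ toColex K :=
    fun K hK => (Finset.mem_filter.1 hK).2
  choose w hw𝕎 hwK hwmax using getW
  have hFFcard : ∀ K ∈ FF, #K = a := fun K hK =>
    (Finset.mem_powersetCard.1 (Finset.mem_filter.1 hK).1).2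
  -- ## the spanning argument : m ≤ #FF
  set S0 : Finset (En n) := FF.attach.image (fun K => w K.1 K.2) with hS0
  have key : ∀ N : ℕ, ∀ u, u ∈ 𝕎 → ∀ Ks : Finset (Fin n), #Ks = a → coord Ks u ≠ 0 →
      (∀ K', #K' = a → coord K' u ≠ 0 → toColex K' ≤ toColex Ks) →
      #((univ.powersetCard a).filter (fun K => toColex K ≤ toColex Ks)) ≤ N →
      u ∈ Submodule.span ℚ (↑S0 : Set (En n)) := by
    intro N
    induction N using Nat.strong_induction_on with
    | _ N ih =>
      intro u hu Ks hKsa hKsne hKsmax hNle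
      have hKsFF : Ks ∈ FF := Finset.mem_filter.2
        ⟨Finset.mem_powersetCard.2 ⟨Finset.subset_univ _, hKsa⟩, ⟨u, hu, hKsne, hKsmax⟩⟩
      set w' := w Ks hKsFF with hw'
      have hw'span : w' ∈ Submodule.span ℚ (↑S0 : Set (En n)) :=
        Submodule.subset_span (Finset.mem_coe.2 (Finset.mem_image.2
          ⟨⟨Ks, hKsFF⟩, Finset.mem_attach _ _, rfl⟩))
      set q : ℚ := coord Ks u / coord Ks w' with hq
      set u' := u - q • w' with hu'
      have hu'𝕎 : u' ∈ 𝕎 := Submodule.sub_mem _ hu (Submodule.smul_mem _ _ (hw𝕎 Ks hKsFF))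
      have hcoordKs : coord Ks u' = 0 := by
        rw [hu', map_sub, map_smul, smul_eq_mul, hq,
          div_mul_cancel₀ _ (hwK Ks hKsFF), sub_self]
      have hu'bound : ∀ K', #K' = a → coord K' u' ≠ 0 → toColex K' < toColex Ks := by
        intro K' hK' hne'
        have hle : toColex K' ≤ toColex Ks := by
          by_cases hcu : coord K' u ≠ 0
          · exact hKsmax K' hK' hcu
          · push_neg at hcu
            refine hwmax Ks hKsFF K' hK' (fun hcw => hne' ?_)
            rw [hu', map_sub, map_smul, hcu, hcw, smul_zero, sub_zero]
        refine lt_of_le_of_ne hle (fun hEq => hne' ?_)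
        rw [toColex_inj.1 hEq, hcoordKs]
      by_cases hu'0 : u' = 0
      · have : u = q • w' := by
          have := sub_eq_zero.1 (hu' ▸ hu'0)
          exact this
        rw [this]
        exact Submodule.smul_mem _ _ hw'span
      · obtain ⟨Ks', hKs'a, hKs'ne, hKs'max⟩ := hmax u' hu'𝕎 hu'0
        have hlt : toColex Ks' < toColex Ks := hu'bound Ks' hKs'a hKs'ne
        have hssub : (univ.powersetCard a).filter (fun K => toColex K ≤ toColex Ks') ⊂
            (univ.powersetCard a).filter (fun K => toColex K ≤ toColex Ks) := by
          refine (Finset.ssubset_iff_of_subset (fun K hK => ?_)).2 ?_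
          · rw [Finset.mem_filter] at hK ⊢
            exact ⟨hK.1, le_trans hK.2 hlt.le⟩
          exact ⟨Ks, Finset.mem_filter.2
              ⟨Finset.mem_powersetCard.2 ⟨Finset.subset_univ _, hKsa⟩, le_refl _⟩,
            fun hmem => absurd ((Finset.mem_filter.1 hmem).2) (not_le.2 hlt)⟩
        have hcard : #((univ.powersetCard a).filter (fun K => toColex K ≤ toColex Ks')) < N :=
          lt_of_lt_of_le (Finset.card_lt_card hssub) hNle
        have hrec := ih _ hcard u' hu'𝕎 Ks' hKs'a hKs'ne hKs'max (le_refl _)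
        have : u = u' + q • w' := by rw [hu', sub_add_cancel]
        rw [this]
        exact Submodule.add_mem _ hrec (Submodule.smul_mem _ _ hw'span)
  have hspan : 𝕎 ≤ Submodule.span ℚ (↑S0 : Set (En n)) := by
    intro u hu
    by_cases hu0 : u = 0
    · rw [hu0]; exact Submodule.zero_mem _
    · obtain ⟨Ks, h1, h2, h3⟩ := hmax u hu hu0
      exact key _ u hu Ks h1 h2 h3 (le_refl _)
  have hmFF : m ≤ #FF := by
    haveI : FiniteDimensional ℚ (Submodule.span ℚ (↑S0 : Set (En n))) :=
      FiniteDimensional.span_of_finite ℚ S0.finite_toSet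
    have h1 : Module.finrank ℚ 𝕎 = m := by
      rw [h𝕎, finrank_span_eq_card hindA, Fintype.card_fin]
    have h2 : Module.finrank ℚ 𝕎 ≤ Module.finrank ℚ (Submodule.span ℚ (↑S0 : Set (En n))) :=
      LinearMap.finrank_le_finrank_of_injective
        (Submodule.inclusion_injective (h := hspan))
    have h3 := finrank_span_finset_le_card (R := ℚ) S0
    calc m = Module.finrank ℚ 𝕎 := h1.symm
      _ ≤ _ := h2
      _ ≤ #S0 := h3
      _ ≤ #FF.attach := Finset.card_image_le
      _ = #FF := Finset.card_attach
  -- ## reduce the goal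
  have hgoal : (a + b - 1).choose (a - 1) = (n - 1).choose b := by
    have h1 : a - 1 ≤ n - 1 := by omega
    have h2 : (n - 1) - (a - 1) = b := by omega
    have h3 := Nat.choose_symm h1
    rw [h2] at h3
    rw [← h3]
  rw [hgoal]
  by_contra hcon
  push_neg at hcon
  -- ## the upper shadow family
  set 𝒰 : Finset (Finset (Fin n)) := (univ.powersetCard b).filter (fun W => ∃ K ∈ FF, K ⊆ W)
    with h𝒰
  have h𝒰card : ∀ W ∈ 𝒰, #W = b := fun W hW =>
    (Finset.mem_powersetCard.1 (Finset.mem_filter.1 hW).1).2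
  have getKW : ∀ W, W ∈ 𝒰 → ∃ K, (K ∈ FF ∧ K ⊆ W) ∧
      ∀ K', K' ∈ FF → K' ⊆ W → toColex K' ≤ toColex K := by
    intro W hW
    obtain ⟨K₀, hK₀⟩ := (Finset.mem_filter.1 hW).2
    set F2 := FF.filter (fun K => K ⊆ W) with hF2
    have hne : F2.Nonempty := ⟨K₀, Finset.mem_filter.2 ⟨hK₀.1, hK₀.2⟩⟩
    obtain ⟨K, hKF2, hKmax⟩ := Finset.exists_max_image F2 toColex hne
    exact ⟨K, ⟨(Finset.mem_filter.1 hKF2).1, (Finset.mem_filter.1 hKF2).2⟩,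
      fun K' h1 h2 => hKmax K' (Finset.mem_filter.2 ⟨h1, h2⟩)⟩
  choose KW hKW1 hKW2 using getKW
  set yv : ∀ W, W ∈ 𝒰 → En n :=
    fun W hW => w (KW W hW) (hKW1 W hW).1 * eM (W \ KW W hW) with hyv
  have hyWmem : ∀ W (hW : W ∈ 𝒰), yv W hW ∈ spanDeg n b := by
    intro W hW
    have h := mul_eM_mem_spanDeg (h𝕎deg (hw𝕎 _ (hKW1 W hW).1)) (W \ KW W hW)
    have hcd : a + #(W \ KW W hW) = b := by
      rw [Finset.card_sdiff_of_subset (hKW1 W hW).2, h𝒰card W hW, hFFcard _ (hKW1 W hW).1]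
      omega
    rwa [hcd] at h
  have hylt : ∀ W, W ∈ 𝒰 → ∀ W', (hW' : W' ∈ 𝒰) → ∀ (hW : W ∈ 𝒰),
      toColex W' < toColex W → coord W (yv W' hW') = 0 := by
    intro W hWm W' hW' hW hltW
    have hu'deg : w (KW W' hW') (hKW1 W' hW').1 ∈ spanDeg n a := h𝕎deg (hw𝕎 _ _)
    have hK'a : #(KW W' hW') = a := hFFcard _ (hKW1 W' hW').1
    have hK'sub : KW W' hW' ⊆ W' := (hKW1 W' hW').2
    have hT'card : #(W' \ KW W' hW') = b - a := by
      rw [Finset.card_sdiff_of_subset hK'sub, h𝒰card W' hW', hK'a]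
    have hcards : a + #(W' \ KW W' hW') = #W := by
      rw [hT'card, h𝒰card W hW]
      omega
    by_cases hTS : W' \ KW W' hW' ⊆ W
    · obtain ⟨ε, hε, heq⟩ := coord_mul_eM_of_subset hu'deg hcards hTS
      rw [hyv, heq]
      have hz : coord (W \ (W' \ KW W' hW')) (w (KW W' hW') (hKW1 W' hW').1) = 0 := by
        by_contra hnz
        have hcardWT : #(W \ (W' \ KW W' hW')) = a := by
          rw [Finset.card_sdiff_of_subset hTS, h𝒰card W hW, hT'card]
          omega
        have hle := hwmax (KW W' hW') (hKW1 W' hW').1 _ hcardWT hnz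
        have hlt2 : toColex (W' \ (W' \ KW W' hW')) < toColex (W \ (W' \ KW W' hW')) :=
          (toColex_sdiff_lt_toColex_sdiff Finset.sdiff_subset hTS).2 hltW
        rw [Finset.sdiff_sdiff_eq_self hK'sub] at hlt2
        exact absurd (lt_of_lt_of_le hlt2 hle) (lt_irrefl _)
      rw [hz, mul_zero]
    · rw [hyv]
      exact coord_mul_eM_of_not_subset hu'deg hcards hTS
  have hyself : ∀ W (hW : W ∈ 𝒰), coord W (yv W hW) ≠ 0 := by
    intro W hW
    have hudeg : w (KW W hW) (hKW1 W hW).1 ∈ spanDeg n a := h𝕎deg (hw𝕎 _ _)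
    have hKa : #(KW W hW) = a := hFFcard _ (hKW1 W hW).1
    have hKsub : KW W hW ⊆ W := (hKW1 W hW).2
    have hcards : a + #(W \ KW W hW) = #W := by
      rw [Finset.card_sdiff_of_subset hKsub, h𝒰card W hW, hKa]
      omega
    obtain ⟨ε, hε, heq⟩ := coord_mul_eM_of_subset hudeg hcards Finset.sdiff_subset
    rw [hyv, heq, Finset.sdiff_sdiff_eq_self hKsub]
    exact mul_ne_zero hε (hwK _ (hKW1 W hW).1)
  have hAy : ∀ i W (hW : W ∈ 𝒰), Df n (wA i * yv W hW) = 0 := by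
    intro i W hW
    rw [hyv, ← mul_assoc, hwAu0 i _ (hw𝕎 _ (hKW1 W hW).1), zero_mul, map_zero]
  -- ## the grand linearly independent family
  set famB : Fin m ⊕ {W // W ∈ 𝒰} → En n := Sum.elim wB (fun Ws => yv Ws.1 Ws.2) with hfamB
  have hfmem : ∀ idx, famB idx ∈ spanDeg n b := by
    rintro (j | Ws)
    · exact hwBmem j
    · exact hyWmem Ws.1 Ws.2
  have hind : LinearIndependent ℚ famB := by
    rw [Fintype.linearIndependent_iff]
    intro g hg
    rw [Fintype.sum_sum_type] at hg
    simp only [hfamB, Sum.elim_inl, Sum.elim_inr] at hg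
    have hgA : ∀ j, g (Sum.inl j) = 0 := by
      refine tri_min (fun i j => Df n (wA i * wB j)) _
        (fun i j hij => by show Df n (wA i * wB j) = 0; rw [hAB0 i j hij, map_zero])
        hdiag (fun i => ?_)
      have h0 : Df n (wA i * ((∑ j, g (Sum.inl j) • wB j) +
          ∑ Ws : {W // W ∈ 𝒰}, g (Sum.inr Ws) • yv Ws.1 Ws.2)) = 0 := by
        rw [hg, mul_zero, map_zero]
      rw [mul_add, map_add] at h0
      have hz : Df n (wA i * ∑ Ws : {W // W ∈ 𝒰}, g (Sum.inr Ws) • yv Ws.1 Ws.2) = 0 := by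
        rw [Finset.mul_sum, map_sum]
        refine Finset.sum_eq_zero (fun Ws _ => ?_)
        rw [mul_smul_comm, map_smul, hAy i Ws.1 Ws.2, smul_zero]
      rw [hz, add_zero, Finset.mul_sum, map_sum] at h0
      show ∑ j, g (Sum.inl j) * Df n (wA i * wB j) = 0
      rw [← h0]
      refine Finset.sum_congr rfl (fun j _ => ?_)
      rw [mul_smul_comm, map_smul, smul_eq_mul]
    intro idx
    rcases idx with j | Ws
    · exact hgA j
    · by_contra hne0
      simp only [hgA, zero_smul, Finset.sum_const_zero, zero_add] at hg
      set SuppD := univ.filter (fun Ws : {W // W ∈ 𝒰} => g (Sum.inr Ws) ≠ 0) with hSD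
      have hSDne : SuppD.Nonempty := ⟨Ws, Finset.mem_filter.2 ⟨Finset.mem_univ _, hne0⟩⟩
      obtain ⟨Wm, hWmmem, hWmmax⟩ := Finset.exists_max_image SuppD (fun Ws => toColex Ws.1) hSDne
      have hgWm : g (Sum.inr Wm) ≠ 0 := (Finset.mem_filter.1 hWmmem).2
      have h0 := congrArg (coord Wm.1) hg
      rw [map_sum, map_zero] at h0
      rw [Finset.sum_eq_single Wm] at h0
      · rw [map_smul, smul_eq_mul] at h0
        exact hgWm ((mul_eq_zero.1 h0).resolve_right (hyself Wm.1 Wm.2))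
      · intro Ws' _ hne
        by_cases hg' : g (Sum.inr Ws') = 0
        · rw [hg', zero_smul, map_zero]
        · have hlt : toColex Ws'.1 < toColex Wm.1 := by
            refine lt_of_le_of_ne
              (hWmmax Ws' (Finset.mem_filter.2 ⟨Finset.mem_univ _, hg'⟩))
              (fun hEq => hne ?_)
            exact Subtype.ext (toColex_inj.1 hEq)
          rw [map_smul, hylt Wm.1 Wm.2 Ws'.1 Ws'.2 Wm.2 hlt, smul_zero]
      · exact fun h => absurd (Finset.mem_univ _) h
  -- ## counting
  haveI : FiniteDimensional ℚ (spanDeg n b) :=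
    FiniteDimensional.span_of_finite ℚ (Set.finite_range _)
  have hcount : m + #𝒰 ≤ n.choose b := by
    set famB' : Fin m ⊕ {W // W ∈ 𝒰} → spanDeg n b := fun idx => ⟨famB idx, hfmem idx⟩
      with hfamB'
    have hind' : LinearIndependent ℚ famB' := by
      refine LinearIndependent.of_comp (spanDeg n b).subtype ?_
      have hcomp : (spanDeg n b).subtype ∘ famB' = famB := rfl
      rw [hcomp]
      exact hind
    have h1 := hind'.fintype_card_le_finrank
    rw [Fintype.card_sum, Fintype.card_fin, Fintype.card_coe] at h1
    have h2 : Module.finrank ℚ (spanDeg n b) ≤ n.choose b := by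
      have hrange : Set.range (fun K : {K : Finset (Fin n) // #K = b} => eM K.1)
          = ↑(Finset.univ.image (fun K : {K : Finset (Fin n) // #K = b} => eM K.1)) := by
        rw [Finset.coe_image, Finset.coe_univ, Set.image_univ]
      have h3 := finrank_span_finset_le_card (R := ℚ)
        (Finset.univ.image (fun K : {K : Finset (Fin n) // #K = b} => eM K.1))
      have h4 : Module.finrank ℚ (spanDeg n b) ≤
          #(Finset.univ.image (fun K : {K : Finset (Fin n) // #K = b} => eM K.1)) := by
        rw [spanDeg, hrange]
        exact h3
      have h5 : #(Finset.univ.image (fun K : {K : Finset (Fin n) // #K = b} => eM K.1))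
          ≤ Fintype.card {K : Finset (Fin n) // #K = b} := by
        refine le_trans Finset.card_image_le ?_
        rw [Finset.card_univ]
      have h6 : Fintype.card {K : Finset (Fin n) // #K = b} = n.choose b := by
        rw [Fintype.card_subtype]
        have : (univ : Finset (Finset (Fin n))).filter (fun K => #K = b)
            = (univ : Finset (Fin n)).powersetCard b := by
          rw [Finset.powersetCard_eq_filter, Finset.powerset_univ]
        rw [this, Finset.card_powersetCard, Finset.card_univ, Fintype.card_fin]
      omega
    omega
  -- ## Kruskal–Katona
  have hsized : (↑(FF.image (·ᶜ)) : Set (Finset (Fin n))).Sized b := by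
    intro W hW
    rw [Finset.coe_image] at hW
    obtain ⟨K, hK, rfl⟩ := hW
    rw [Finset.card_compl, Fintype.card_fin, hFFcard K hK]
    omega
  have himgcard : #(FF.image (·ᶜ)) = #FF :=
    Finset.card_image_of_injective _ compl_injective
  have hKKform := Finset.kruskal_katona_lovasz_form (n := n) (i := b - a) (r := b) (k := n - 1)
    (by omega) (by omega) (by omega) hsized (by omega)
  rw [show b - (b - a) = a from by omega] at hKKform
  have hinsteq : ∀ (i1 i2 : DecidableEq (Fin n)),
      @Finset.shadow (Fin n) i1 = @Finset.shadow (Fin n) i2 := fun i1 i2 => by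
    rw [Subsingleton.elim i1 i2]
  have hUB : (n - 1).choose a ≤ #𝒰 := by
    refine hKKform.trans ?_
    rw [hinsteq _ (instDecidableEqFin n)]
    refine Finset.card_le_card_of_injOn (·ᶜ) ?_ ?_
    · intro Sc hSc
      obtain ⟨C, hC, hsub, hcd⟩ := Finset.mem_shadow_iterate_iff_exists_sdiff.1 hSc
      obtain ⟨K, hKFF, rfl⟩ := Finset.mem_image.1 hC
      have hCcard : #(Kᶜ) = b := by
        rw [Finset.card_compl, Fintype.card_fin, hFFcard K hKFF]
        omega
      have hsub' : #Sc ≤ b := by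
        have := Finset.card_le_card hsub
        omega
      have hScc : #Sc = a := by
        have h9 : #(Kᶜ \ Sc) = #Kᶜ - #Sc := Finset.card_sdiff_of_subset hsub
        rw [hcd, hCcard] at h9
        omega
      refine Finset.mem_coe.2 (Finset.mem_filter.2
        ⟨Finset.mem_powersetCard.2 ⟨Finset.subset_univ _, ?_⟩, ⟨K, hKFF, ?_⟩⟩)
      · rw [Finset.card_compl, Fintype.card_fin, hScc]
        omega
      · intro x hx
        rw [Finset.mem_compl]
        exact fun hxSc => (Finset.mem_compl.1 (hsub hxSc)) hx
    · intro x _ y _ h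
      exact compl_injective h
  have hpascal : n.choose b = (n - 1).choose (b - 1) + (n - 1).choose b := by
    have hb1 : b = (b - 1) + 1 := by omega
    have hn1 : n = (n - 1) + 1 := by omega
    calc n.choose b = ((n - 1) + 1).choose ((b - 1) + 1) := by rw [← hb1, ← hn1]
      _ = (n - 1).choose (b - 1) + (n - 1).choose ((b - 1) + 1) := Nat.choose_succ_succ _ _
      _ = (n - 1).choose (b - 1) + (n - 1).choose b := by rw [← hb1]
  have hsymm2 : (n - 1).choose (b - 1) = (n - 1).choose a := by
    have h1 : b - 1 ≤ n - 1 := by omega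
    have h3 := Nat.choose_symm h1
    rw [show (n - 1) - (b - 1) = a from by omega] at h3
    exact h3.symm
  omega
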